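/- Parity obstruction for covering a rectangle perimeter by diagonals: Suppose the 8k boundary points of a (2k+1)×(2k+1) grid-aligned square (its four sides C_a, C_b, R_{a'}, R_{b'}, with corners (a,a'), (a,b'), (b,a'), (b,b')) must each be covered by one of 2k lines of slope +1 and 2k lines of slope -1, where each line covers at most 2 of these points, the slope -1 diagonal through (a,b') and (b,a') is used, and the slope +1 diagonal through (a,a') and (b,b') is used. If every line covers exactly 2 boundary points, then the number of slope +1 lines needed is odd, contradicting that it equals 2k. Hence no such covering exists. -/

import Mathlib

/-- The perimeter of the axis-aligned square with corners `(a,a')` and `(b,b')`: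
lattice points in the square lying on its boundary. -/
def squarePerimeter (a b a' b' : ℤ) : Set (ℤ × ℤ) :=
  {p | a ≤ p.1 ∧ p.1 ≤ b ∧ a' ≤ p.2 ∧ p.2 ≤ b' ∧
       (p.1 = a ∨ p.1 = b ∨ p.2 = a' ∨ p.2 = b')}

private lemma cover_aux (n : ℤ) (S T : Finset ℤ) (f g : ℤ → ℤ) (I J : Finset ℤ)
    (hfI : ∀ i ∈ Finset.Ioo (0:ℤ) n, f i ∈ I)
    (hgJ : ∀ i ∈ Finset.Ioo (0:ℤ) n, g i ∈ J)
    (hfinj : ∀ i ∈ Finset.Ioo (0:ℤ) n, ∀ j ∈ Finset.Ioo (0:ℤ) n, f i = f j → i = j)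
    (hginj : ∀ i ∈ Finset.Ioo (0:ℤ) n, ∀ j ∈ Finset.Ioo (0:ℤ) n, g i = g j → i = j)
    (h : ∀ i ∈ Finset.Ioo (0:ℤ) n, f i ∈ S ∨ g i ∈ T) :
    (Finset.Ioo (0:ℤ) n).card ≤ (S ∩ I).card + (T ∩ J).card := by
  classical
  have h1 : ((Finset.Ioo (0:ℤ) n).filter (fun i => f i ∈ S)).card ≤ (S ∩ I).card := by
    apply Finset.card_le_card_of_injOn f
    · intro i hi
      simp only [Finset.coe_filter, Set.mem_setOf_eq] at hi
      exact Finset.mem_inter.mpr ⟨hi.2, hfI i hi.1⟩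
    · intro i hi j hj hij
      simp only [Finset.coe_filter, Set.mem_setOf_eq] at hi hj
      exact hfinj i hi.1 j hj.1 hij
  have h2 : ((Finset.Ioo (0:ℤ) n).filter (fun i => ¬ f i ∈ S)).card ≤ (T ∩ J).card := by
    apply Finset.card_le_card_of_injOn g
    · intro i hi
      simp only [Finset.coe_filter, Set.mem_setOf_eq] at hi
      exact Finset.mem_inter.mpr ⟨(h i hi.1).resolve_left hi.2, hgJ i hi.1⟩
    · intro i hi j hj hij
      simp only [Finset.coe_filter, Set.mem_setOf_eq] at hi hj
      exact hginj i hi.1 j hj.1 hij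
  have h3 := Finset.card_filter_add_card_filter_not
    (s := Finset.Ioo (0:ℤ) n) (p := fun i => f i ∈ S)
  omega

private lemma three_disj (S U V W : Finset ℤ) (hU : U ⊆ S) (hV : V ⊆ S) (hW : W ⊆ S)
    (dUV : Disjoint U V) (dUW : Disjoint U W) (dVW : Disjoint V W) :
    U.card + V.card + W.card ≤ S.card := by
  have hsub : U ∪ V ∪ W ⊆ S := Finset.union_subset (Finset.union_subset hU hV) hW
  have e1 : (U ∪ V ∪ W).card = U.card + V.card + W.card := by
    rw [Finset.card_union_of_disjoint (Finset.disjoint_union_left.mpr ⟨dUW, dVW⟩),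
        Finset.card_union_of_disjoint dUV]
  calc U.card + V.card + W.card = (U ∪ V ∪ W).card := e1.symm
    _ ≤ S.card := Finset.card_le_card hsub

private lemma bound_aux (n : ℤ) (S K : Finset ℤ) (u w : ℤ)
    (hd : u + n ≤ w ∨ w + n ≤ u)
    (hK : K ⊆ S)
    (hKu : ∀ x ∈ K, ¬ (u < x ∧ x < u + n))
    (hKw : ∀ x ∈ K, ¬ (w < x ∧ x < w + n)) :
    (S ∩ Finset.Ioo u (u+n)).card + (S ∩ Finset.Ioo w (w+n)).card + K.card ≤ S.card := by
  apply three_disj S _ _ _ Finset.inter_subset_left Finset.inter_subset_left hK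
  · rw [Finset.disjoint_left]
    intro x hx hx'
    simp only [Finset.mem_inter, Finset.mem_Ioo] at hx hx'
    omega
  · rw [Finset.disjoint_left]
    intro x hx hx'
    simp only [Finset.mem_inter, Finset.mem_Ioo] at hx
    exact hKu x hx' ⟨hx.2.1, hx.2.2⟩
  · rw [Finset.disjoint_left]
    intro x hx hx'
    simp only [Finset.mem_inter, Finset.mem_Ioo] at hx
    exact hKw x hx' ⟨hx.2.1, hx.2.2⟩

theorem stmt_15 (k : ℕ) (hk : 1 ≤ k) (a b a' b' : ℤ)
    (hb : b = a + 2 * k) (hb' : b' = a' + 2 * k)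
    (Dplus Dminus : Finset ℤ)
    (hDplus : Dplus.card = 2 * k) (hDminus : Dminus.card = 2 * k) :
    ¬ (∀ p ∈ squarePerimeter a b a' b',
        (p.2 - p.1) ∈ Dplus ∨ (p.2 + p.1) ∈ Dminus) := by
  subst hb hb'
  intro h
  set n : ℤ := 2 * (k : ℤ) with hn
  have hn2 : (2:ℤ) ≤ n := by omega
  -- the four side coverings
  have hleft : ∀ i ∈ Finset.Ioo (0:ℤ) n,
      ((a' - a) + i ∈ Dplus ∨ (a' + a) + i ∈ Dminus) := by
    intro i hi
    rw [Finset.mem_Ioo] at hi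
    have hp : (a' + i) - a ∈ Dplus ∨ (a' + i) + a ∈ Dminus :=
      h (a, a' + i) (by simp only [squarePerimeter, Set.mem_setOf_eq]; refine ⟨by omega, by omega, by omega, by omega, by tauto⟩)
    rcases hp with h1 | h1
    · exact Or.inl (by rw [show (a' - a) + i = (a' + i) - a by ring]; exact h1)
    · exact Or.inr (by rw [show (a' + a) + i = (a' + i) + a by ring]; exact h1)
  have htop : ∀ i ∈ Finset.Ioo (0:ℤ) n,
      ((a' - a) + n - i ∈ Dplus ∨ (a' + a) + n + i ∈ Dminus) := by
    intro i hi
    rw [Finset.mem_Ioo] at hi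
    have hp : (a' + n) - (a + i) ∈ Dplus ∨ (a' + n) + (a + i) ∈ Dminus :=
      h (a + i, a' + n) (by simp only [squarePerimeter, Set.mem_setOf_eq]; refine ⟨by omega, by omega, by omega, by omega, by tauto⟩)
    rcases hp with h1 | h1
    · exact Or.inl (by rw [show (a' - a) + n - i = (a' + n) - (a + i) by ring]; exact h1)
    · exact Or.inr (by rw [show (a' + a) + n + i = (a' + n) + (a + i) by ring]; exact h1)
  have hbot : ∀ i ∈ Finset.Ioo (0:ℤ) n,
      ((a' - a - n) + (n - i) ∈ Dplus ∨ (a' + a) + i ∈ Dminus) := by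
    intro i hi
    rw [Finset.mem_Ioo] at hi
    have hp : a' - (a + i) ∈ Dplus ∨ a' + (a + i) ∈ Dminus :=
      h (a + i, a') (by simp only [squarePerimeter, Set.mem_setOf_eq]; refine ⟨by omega, by omega, by omega, by omega, by tauto⟩)
    rcases hp with h1 | h1
    · exact Or.inl (by rw [show (a' - a - n) + (n - i) = a' - (a + i) by ring]; exact h1)
    · exact Or.inr (by rw [show (a' + a) + i = a' + (a + i) by ring]; exact h1)
  have hright : ∀ i ∈ Finset.Ioo (0:ℤ) n,
      ((a' - a - n) + i ∈ Dplus ∨ (a' + a) + n + i ∈ Dminus) := by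
    intro i hi
    rw [Finset.mem_Ioo] at hi
    have hp : (a' + i) - (a + n) ∈ Dplus ∨ (a' + i) + (a + n) ∈ Dminus :=
      h (a + n, a' + i) (by simp only [squarePerimeter, Set.mem_setOf_eq]; refine ⟨by omega, by omega, by omega, by omega, by tauto⟩)
    rcases hp with h1 | h1
    · exact Or.inl (by rw [show (a' - a - n) + i = (a' + i) - (a + n) by ring]; exact h1)
    · exact Or.inr (by rw [show (a' + a) + n + i = (a' + i) + (a + n) by ring]; exact h1)
  -- the four corners
  have hc1 : (a' - a) ∈ Dplus ∨ (a' + a) ∈ Dminus :=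
    h (a, a') (by simp only [squarePerimeter, Set.mem_setOf_eq]; refine ⟨by omega, by omega, by omega, by omega, by tauto⟩)
  have hc2 : (a' - a) + n ∈ Dplus ∨ (a' + a) + n ∈ Dminus := by
    have hp : (a' + n) - a ∈ Dplus ∨ (a' + n) + a ∈ Dminus :=
      h (a, a' + n) (by simp only [squarePerimeter, Set.mem_setOf_eq]; refine ⟨by omega, by omega, by omega, by omega, by tauto⟩)
    rcases hp with h1 | h1
    · exact Or.inl (by rw [show (a' - a) + n = (a' + n) - a by ring]; exact h1)
    · exact Or.inr (by rw [show (a' + a) + n = (a' + n) + a by ring]; exact h1)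
  have hc3 : (a' - a) - n ∈ Dplus ∨ (a' + a) + n ∈ Dminus := by
    have hp : a' - (a + n) ∈ Dplus ∨ a' + (a + n) ∈ Dminus :=
      h (a + n, a') (by simp only [squarePerimeter, Set.mem_setOf_eq]; refine ⟨by omega, by omega, by omega, by omega, by tauto⟩)
    rcases hp with h1 | h1
    · exact Or.inl (by rw [show (a' - a) - n = a' - (a + n) by ring]; exact h1)
    · exact Or.inr (by rw [show (a' + a) + n = a' + (a + n) by ring]; exact h1)
  have hc4 : (a' - a) ∈ Dplus ∨ (a' + a) + n + n ∈ Dminus := by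
    have hp : (a' + n) - (a + n) ∈ Dplus ∨ (a' + n) + (a + n) ∈ Dminus :=
      h (a + n, a' + n) (by simp only [squarePerimeter, Set.mem_setOf_eq]; refine ⟨by omega, by omega, by omega, by omega, by tauto⟩)
    rcases hp with h1 | h1
    · exact Or.inl (by rw [show (a' - a) = (a' + n) - (a + n) by ring]; exact h1)
    · exact Or.inr (by rw [show (a' + a) + n + n = (a' + n) + (a + n) by ring]; exact h1)
  -- side counting inequalities
  have hm : (Finset.Ioo (0:ℤ) n).card = 2 * k - 1 := by
    rw [Int.card_Ioo]; omega
  have hAC := cover_aux n Dplus Dminus (fun i => (a' - a) + i) (fun i => (a' + a) + i)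
    (Finset.Ioo (a' - a) (a' - a + n)) (Finset.Ioo (a' + a) (a' + a + n))
    (by intro i hi; rw [Finset.mem_Ioo] at *; omega)
    (by intro i hi; rw [Finset.mem_Ioo] at *; omega)
    (by intro i _ j _ hij; omega)
    (by intro i _ j _ hij; omega) hleft
  have hAD := cover_aux n Dplus Dminus (fun i => (a' - a) + n - i) (fun i => (a' + a) + n + i)
    (Finset.Ioo (a' - a) (a' - a + n)) (Finset.Ioo (a' + a + n) (a' + a + n + n))
    (by intro i hi; rw [Finset.mem_Ioo] at *; omega)
    (by intro i hi; rw [Finset.mem_Ioo] at *; omega)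
    (by intro i _ j _ hij; omega)
    (by intro i _ j _ hij; omega) htop
  have hBC := cover_aux n Dplus Dminus (fun i => (a' - a - n) + (n - i)) (fun i => (a' + a) + i)
    (Finset.Ioo (a' - a - n) (a' - a - n + n)) (Finset.Ioo (a' + a) (a' + a + n))
    (by intro i hi; rw [Finset.mem_Ioo] at *; omega)
    (by intro i hi; rw [Finset.mem_Ioo] at *; omega)
    (by intro i _ j _ hij; omega)
    (by intro i _ j _ hij; omega) hbot
  have hBD := cover_aux n Dplus Dminus (fun i => (a' - a - n) + i) (fun i => (a' + a) + n + i)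
    (Finset.Ioo (a' - a - n) (a' - a - n + n)) (Finset.Ioo (a' + a + n) (a' + a + n + n))
    (by intro i hi; rw [Finset.mem_Ioo] at *; omega)
    (by intro i hi; rw [Finset.mem_Ioo] at *; omega)
    (by intro i _ j _ hij; omega)
    (by intro i _ j _ hij; omega) hright
  -- trivial upper bounds
  have hub0p : (Dplus ∩ Finset.Ioo (a' - a) (a' - a + n)).card
      + (Dplus ∩ Finset.Ioo (a' - a - n) (a' - a - n + n)).card
      + (∅ : Finset ℤ).card ≤ Dplus.card :=
    bound_aux n Dplus ∅ (a' - a) (a' - a - n) (by omega) (by simp) (by simp) (by simp)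
  have hub0m : (Dminus ∩ Finset.Ioo (a' + a) (a' + a + n)).card
      + (Dminus ∩ Finset.Ioo (a' + a + n) (a' + a + n + n)).card
      + (∅ : Finset ℤ).card ≤ Dminus.card :=
    bound_aux n Dminus ∅ (a' + a) (a' + a + n) (by omega) (by simp) (by simp) (by simp)
  simp only [Finset.card_empty, Nat.add_zero] at hub0p hub0m
  by_cases hx1 : (a' - a) ∈ Dplus
  · by_cases hy2 : (a' + a) + n ∈ Dminus
    · -- main parity case
      have hubp := bound_aux n Dplus {a' - a} (a' - a) (a' - a - n) (by omega)
        (by simp [hx1]) (by intro x hx; simp at hx; omega) (by intro x hx; simp at hx; omega)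
      have hubm := bound_aux n Dminus {(a' + a) + n} (a' + a) (a' + a + n) (by omega)
        (by simp [hy2]) (by intro x hx; simp at hx; omega) (by intro x hx; simp at hx; omega)
      simp only [Finset.card_singleton] at hubp hubm
      omega
    · have hx2 : (a' - a) + n ∈ Dplus := hc2.resolve_right hy2
      have hx3 : (a' - a) - n ∈ Dplus := hc3.resolve_right hy2
      have hK : ({a' - a, (a' - a) + n, (a' - a) - n} : Finset ℤ).card = 3 := by
        rw [Finset.card_insert_of_notMem (by simp; omega),
            Finset.card_insert_of_notMem (by simp; omega), Finset.card_singleton]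
      have hubp := bound_aux n Dplus {a' - a, (a' - a) + n, (a' - a) - n}
        (a' - a) (a' - a - n) (by omega)
        (by intro x hx; simp at hx; rcases hx with h' | h' | h' <;> subst h' <;>
              first | exact hx1 | exact hx2 | exact hx3)
        (by intro x hx; simp at hx; omega) (by intro x hx; simp at hx; omega)
      omega
  · have hy1 : (a' + a) ∈ Dminus := hc1.resolve_left hx1
    have hy3 : (a' + a) + n + n ∈ Dminus := hc4.resolve_left hx1
    have hcase : ((a' + a) + n ∈ Dminus) ∨
        ((a' - a) + n ∈ Dplus ∧ (a' - a) - n ∈ Dplus) := by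
      rcases hc2 with h2 | h2
      · rcases hc3 with h3 | h3
        · exact Or.inr ⟨h2, h3⟩
        · exact Or.inl h3
      · exact Or.inl h2
    rcases hcase with hy2 | ⟨hx2, hx3⟩
    · have hK : ({a' + a, (a' + a) + n, (a' + a) + n + n} : Finset ℤ).card = 3 := by
        rw [Finset.card_insert_of_notMem (by simp; omega),
            Finset.card_insert_of_notMem (by simp; omega), Finset.card_singleton]
      have hubm := bound_aux n Dminus {a' + a, (a' + a) + n, (a' + a) + n + n}
        (a' + a) (a' + a + n) (by omega)
        (by intro x hx; simp at hx; rcases hx with h' | h' | h' <;> subst h' <;>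
              first | exact hy1 | exact hy2 | exact hy3)
        (by intro x hx; simp at hx; omega) (by intro x hx; simp at hx; omega)
      omega
    · have hKp : ({(a' - a) + n, (a' - a) - n} : Finset ℤ).card = 2 := by
        rw [Finset.card_insert_of_notMem (by simp; omega), Finset.card_singleton]
      have hubp := bound_aux n Dplus {(a' - a) + n, (a' - a) - n}
        (a' - a) (a' - a - n) (by omega)
        (by intro x hx; simp at hx; rcases hx with h' | h' <;> subst h' <;>
              first | exact hx2 | exact hx3)
        (by intro x hx; simp at hx; omega) (by intro x hx; simp at hx; omega)
      have hKm : ({a' + a, (a' + a) + n + n} : Finset ℤ).card = 2 := by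
        rw [Finset.card_insert_of_notMem (by simp; omega), Finset.card_singleton]
      have hubm := bound_aux n Dminus {a' + a, (a' + a) + n + n}
        (a' + a) (a' + a + n) (by omega)
        (by intro x hx; simp at hx; rcases hx with h' | h' <;> subst h' <;>
              first | exact hy1 | exact hy3)
        (by intro x hx; simp at hx; omega) (by intro x hx; simp at hx; omega)
      omega
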